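/- For probability density functions p, q ∈ L^α(μ) with α > 1, the Minkowski log-ratio distance L_α(p,q) := log((‖p‖_α + ‖q‖_α)/‖p+q‖_α) is nonnegative, and equals 0 if and only if p = q almost everywhere. -/

import Mathlib

open MeasureTheory

/-- Pointwise convexity inequality used for Minkowski's inequality. -/
private lemma conv_pt {α A B a b : ℝ} (hα : 1 ≤ α) (hA : 0 < A) (hB : 0 < B)
    (ha : 0 ≤ a) (hb : 0 ≤ b) :
    ((a + b) / (A + B)) ^ α ≤ A / (A + B) * (a / A) ^ α + B / (A + B) * (b / B) ^ α := by
  have hAB : 0 < A + B := by linarith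
  have h := (convexOn_rpow hα).2 (Set.mem_Ici.2 (div_nonneg ha hA.le))
    (Set.mem_Ici.2 (div_nonneg hb hB.le)) (div_nonneg hA.le hAB.le)
    (div_nonneg hB.le hAB.le) (by field_simp)
  simp only [smul_eq_mul] at h
  have harg : A / (A + B) * (a / A) + B / (A + B) * (b / B) = (a + b) / (A + B) := by
    field_simp
  rwa [harg] at h

/-- Equality case: strict convexity of `x ^ α` forces `a / A = b / B`. -/
private lemma conv_pt_eq {α A B a b : ℝ} (hα : 1 < α) (hA : 0 < A) (hB : 0 < B)
    (ha : 0 ≤ a) (hb : 0 ≤ b)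
    (h : ((a + b) / (A + B)) ^ α = A / (A + B) * (a / A) ^ α + B / (A + B) * (b / B) ^ α) :
    a / A = b / B := by
  have hAB : 0 < A + B := by linarith
  by_contra hne
  have hs := (strictConvexOn_rpow hα).2 (Set.mem_Ici.2 (div_nonneg ha hA.le))
    (Set.mem_Ici.2 (div_nonneg hb hB.le)) hne (div_pos hA hAB) (div_pos hB hAB)
    (by field_simp)
  simp only [smul_eq_mul] at hs
  have harg : A / (A + B) * (a / A) + B / (A + B) * (b / B) = (a + b) / (A + B) := by
    field_simp
  rw [harg] at hs
  exact absurd h (ne_of_lt hs)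

/-- A nonnegative function with nonzero integral has positive `α`-moment. -/
private lemma pos_int {X : Type*} [MeasurableSpace X] {μ : Measure X} {α : ℝ}
    (hαne : α ≠ 0) {f : X → ℝ} (hf0 : ∀ x, 0 ≤ f x)
    (hfi : Integrable (fun x => f x ^ α) μ) (hI : ∫ x, f x ∂μ ≠ 0) :
    0 < ∫ x, f x ^ α ∂μ := by
  rcases lt_or_eq_of_le (integral_nonneg (f := fun x => f x ^ α) fun x => Real.rpow_nonneg (hf0 x) α) with h | h
  · exact h
  · exfalso
    have h0 : (fun x => f x ^ α) =ᵐ[μ] 0 :=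
      (integral_eq_zero_iff_of_nonneg_ae
        (Filter.Eventually.of_forall fun x => Real.rpow_nonneg (hf0 x) α) hfi).mp h.symm
    have hf0' : f =ᵐ[μ] 0 := h0.mono fun x hx => by
      simpa [Real.rpow_eq_zero (hf0 x) hαne] using hx
    exact hI ((integral_congr_ae hf0').trans (by simp))

/-- For probability densities `p, q ∈ L^α(μ)` with `α > 1`, the Minkowski
log-ratio distance `L_α(p,q) = log((‖p‖_α + ‖q‖_α)/‖p+q‖_α)` is nonnegative and
vanishes iff `p = q` almost everywhere. -/
theorem minkowski_log_ratio_distance_nonneg_and_eq_zero_iff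
    {X : Type*} [MeasurableSpace X] (μ : Measure X) (α : ℝ) (hα : 1 < α)
    (p q : X → ℝ) (hp0 : ∀ x, 0 ≤ p x) (hq0 : ∀ x, 0 ≤ q x)
    (hp : MemLp p (ENNReal.ofReal α) μ) (hq : MemLp q (ENNReal.ofReal α) μ)
    (hpi : ∫ x, p x ∂μ = 1) (hqi : ∫ x, q x ∂μ = 1) :
    0 ≤ Real.log (((∫ x, |p x| ^ α ∂μ) ^ (1/α) + (∫ x, |q x| ^ α ∂μ) ^ (1/α))
          / (∫ x, |p x + q x| ^ α ∂μ) ^ (1/α)) ∧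
    (Real.log (((∫ x, |p x| ^ α ∂μ) ^ (1/α) + (∫ x, |q x| ^ α ∂μ) ^ (1/α))
          / (∫ x, |p x + q x| ^ α ∂μ) ^ (1/α)) = 0 ↔ p =ᵐ[μ] q) := by
  have hα0 : (0:ℝ) < α := one_pos.trans hα
  have hαne : α ≠ 0 := hα0.ne'
  have e1 : ∀ x, |p x| = p x := fun x => abs_of_nonneg (hp0 x)
  have e2 : ∀ x, |q x| = q x := fun x => abs_of_nonneg (hq0 x)
  have e3 : ∀ x, |p x + q x| = p x + q x := fun x =>
    abs_of_nonneg (add_nonneg (hp0 x) (hq0 x))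
  simp only [e1, e2, e3]
  -- integrability facts
  have hne0 : ENNReal.ofReal α ≠ 0 := by
    simp only [ne_eq, ENNReal.ofReal_eq_zero, not_le]; exact hα0
  have hiP : Integrable (fun x => p x ^ α) μ := by
    have := hp.integrable_norm_rpow hne0 ENNReal.ofReal_ne_top
    simpa [ENNReal.toReal_ofReal hα0.le, Real.norm_eq_abs, e1] using this
  have hiQ : Integrable (fun x => q x ^ α) μ := by
    have := hq.integrable_norm_rpow hne0 ENNReal.ofReal_ne_top
    simpa [ENNReal.toReal_ofReal hα0.le, Real.norm_eq_abs, e2] using this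
  have hiPQ : Integrable (fun x => (p x + q x) ^ α) μ := by
    have := (hp.add hq).integrable_norm_rpow hne0 ENNReal.ofReal_ne_top
    simpa [ENNReal.toReal_ofReal hα0.le, Real.norm_eq_abs, e3] using this
  have hip : Integrable p μ := by
    by_contra h; rw [integral_undef h] at hpi; norm_num at hpi
  have hiq : Integrable q μ := by
    by_contra h; rw [integral_undef h] at hqi; norm_num at hqi
  -- positivity of the moments
  have hIpos : 0 < ∫ x, p x ^ α ∂μ := pos_int hαne hp0 hiP (by rw [hpi]; norm_num)
  have hJpos : 0 < ∫ x, q x ^ α ∂μ := pos_int hαne hq0 hiQ (by rw [hqi]; norm_num)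
  have hKpos : 0 < ∫ x, (p x + q x) ^ α ∂μ := by
    refine pos_int hαne (fun x => add_nonneg (hp0 x) (hq0 x)) hiPQ ?_
    rw [integral_add hip hiq, hpi, hqi]; norm_num
  set I := ∫ x, p x ^ α ∂μ with hIdef
  set J := ∫ x, q x ^ α ∂μ with hJdef
  set K := ∫ x, (p x + q x) ^ α ∂μ with hKdef
  set A := I ^ (1/α) with hAdef
  set B := J ^ (1/α) with hBdef
  set C := K ^ (1/α) with hCdef
  have hA : 0 < A := Real.rpow_pos_of_pos hIpos _
  have hB : 0 < B := Real.rpow_pos_of_pos hJpos _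
  have hC : 0 < C := Real.rpow_pos_of_pos hKpos _
  have hAB : 0 < A + B := by linarith
  have hAα : A ^ α = I := by
    rw [hAdef, ← Real.rpow_mul hIpos.le, one_div_mul_cancel hαne, Real.rpow_one]
  have hBα : B ^ α = J := by
    rw [hBdef, ← Real.rpow_mul hJpos.le, one_div_mul_cancel hαne, Real.rpow_one]
  have hCα : C ^ α = K := by
    rw [hCdef, ← Real.rpow_mul hKpos.le, one_div_mul_cancel hαne, Real.rpow_one]
  -- the pointwise convexity bound, in integrated-friendly form
  set c1 : ℝ := A / (A + B) / I with hc1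
  set c2 : ℝ := B / (A + B) / J with hc2
  have hgle : ∀ x, (p x + q x) ^ α / (A + B) ^ α ≤ c1 * p x ^ α + c2 * q x ^ α := by
    intro x
    have h := conv_pt hα.le hA hB (hp0 x) (hq0 x)
    rw [Real.div_rpow (add_nonneg (hp0 x) (hq0 x)) hAB.le,
      Real.div_rpow (hp0 x) hA.le, Real.div_rpow (hq0 x) hB.le, hAα, hBα] at h
    calc (p x + q x) ^ α / (A + B) ^ α
        ≤ A / (A + B) * (p x ^ α / I) + B / (A + B) * (q x ^ α / J) := h
      _ = c1 * p x ^ α + c2 * q x ^ α := by rw [hc1, hc2]; ring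
  have hgInt : Integrable (fun x => (p x + q x) ^ α / (A + B) ^ α) μ :=
    hiPQ.div_const _
  have hhInt : Integrable (fun x => c1 * p x ^ α + c2 * q x ^ α) μ :=
    (hiP.const_mul c1).add (hiQ.const_mul c2)
  have hsum1 : c1 * I + c2 * J = 1 := by
    rw [hc1, hc2, div_mul_cancel₀ _ hIpos.ne', div_mul_cancel₀ _ hJpos.ne',
      ← add_div, div_self hAB.ne']
  have hint : K / (A + B) ^ α ≤ 1 := by
    calc K / (A + B) ^ α = ∫ x, (p x + q x) ^ α / (A + B) ^ α ∂μ := by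
          rw [integral_div]
      _ ≤ ∫ x, c1 * p x ^ α + c2 * q x ^ α ∂μ :=
          integral_mono hgInt hhInt hgle
      _ = c1 * I + c2 * J := by
          rw [integral_add (hiP.const_mul c1) (hiQ.const_mul c2),
            integral_const_mul, integral_const_mul]
      _ = 1 := hsum1
  have hKle : K ≤ (A + B) ^ α :=
    (div_le_one (Real.rpow_pos_of_pos hAB α)).mp hint
  have hCle : C ≤ A + B := by
    have h1 : C = K ^ (1/α) := hCdef
    have h2 : K ^ (1/α) ≤ ((A + B) ^ α) ^ (1/α) :=
      Real.rpow_le_rpow hKpos.le hKle (by positivity)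
    have h3 : ((A + B) ^ α) ^ (1/α) = A + B := by
      rw [← Real.rpow_mul hAB.le, mul_one_div_cancel hαne, Real.rpow_one]
    rw [h1]; rw [h3] at h2; exact h2
  have hratio : 1 ≤ (A + B) / C := (one_le_div hC).mpr hCle
  constructor
  · exact Real.log_nonneg hratio
  constructor
  · -- equality forces p =ᵐ q
    intro hlog
    have hACB : (A + B) / C = 1 := by
      rcases Real.log_eq_zero.mp hlog with h | h | h
      · linarith
      · exact h
      · linarith
    have hCAB : A + B = C := (div_eq_one_iff_eq hC.ne').mp hACB
    have hKeq : K / (A + B) ^ α = 1 := by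
      rw [hCAB, hCα, div_self hKpos.ne']
    -- the nonnegative difference integrates to zero
    have hdiff0 : (fun x => (c1 * p x ^ α + c2 * q x ^ α) -
        (p x + q x) ^ α / (A + B) ^ α) =ᵐ[μ] 0 := by
      refine (integral_eq_zero_iff_of_nonneg_ae
        (Filter.Eventually.of_forall fun x => sub_nonneg.2 (hgle x))
        (hhInt.sub hgInt)).mp ?_
      rw [integral_sub hhInt hgInt,
        integral_add (hiP.const_mul c1) (hiQ.const_mul c2),
        integral_const_mul, integral_const_mul, ← hIdef, ← hJdef, hsum1]
      rw [show (∫ x, (p x + q x) ^ α / (A + B) ^ α ∂μ) = K / (A + B) ^ α from by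
        rw [integral_div], hKeq, sub_self]
    have hpq : ∀ᵐ x ∂μ, p x = A / B * q x := by
      refine hdiff0.mono fun x hx => ?_
      have hx' : (p x + q x) ^ α / (A + B) ^ α = c1 * p x ^ α + c2 * q x ^ α := by
        have := sub_eq_zero.mp hx; linarith
      have heq : ((p x + q x) / (A + B)) ^ α =
          A / (A + B) * (p x / A) ^ α + B / (A + B) * (q x / B) ^ α := by
        rw [Real.div_rpow (add_nonneg (hp0 x) (hq0 x)) hAB.le,
          Real.div_rpow (hp0 x) hA.le, Real.div_rpow (hq0 x) hB.le, hAα, hBα, hx',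
          hc1, hc2]; ring
      have hd := conv_pt_eq hα hA hB (hp0 x) (hq0 x) heq
      field_simp at hd ⊢
      linarith [hd]
    -- integrate to conclude A = B
    have hint2 : (1:ℝ) = A / B := by
      have : ∫ x, p x ∂μ = ∫ x, A / B * q x ∂μ := integral_congr_ae hpq
      rw [hpi, integral_const_mul, hqi, mul_one] at this
      exact this
    have hABeq : A = B := by
      field_simp at hint2; linarith
    refine hpq.mono fun x hx => ?_
    rw [hx, hABeq, div_self hB.ne', one_mul]
  · -- p =ᵐ q implies the log vanishes
    intro hpq
    have hJI : J = I := by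
      rw [hJdef, hIdef]
      exact integral_congr_ae (hpq.mono fun x hx => by simp only [hx])
    have hKI : K = 2 ^ α * I := by
      rw [hKdef]
      have : (fun x => (p x + q x) ^ α) =ᵐ[μ] fun x => 2 ^ α * p x ^ α :=
        hpq.mono fun x hx => by
          simp only
          rw [← hx, ← two_mul, Real.mul_rpow (by norm_num) (hp0 x)]
      rw [integral_congr_ae this, integral_const_mul, ← hIdef]
    have hBA : B = A := by rw [hBdef, hAdef, hJI]
    have hCA : C = 2 * A := by
      rw [hCdef, hKI, Real.mul_rpow (by positivity) hIpos.le,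
        ← Real.rpow_mul (by norm_num : (0:ℝ) ≤ 2), mul_one_div_cancel hαne,
        Real.rpow_one, ← hAdef]
    rw [hBA, hCA, ← two_mul, div_self (by positivity), Real.log_one]
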